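/- For p ≥ 2, the function F(x) = ‖x‖^p on a real inner product space is p-hyperconvex with some constant c > 0 depending only on p: there exists c > 0 such that for all x, y and θ ∈ [0,1], ‖θx+(1-θ)y‖^p + c·min(θ,1-θ)·‖x-y‖^p ≤ θ‖x‖^p + (1-θ)‖y‖^p. -/

import Mathlib

open Real Set NNReal

private lemma real_add_rpow_le {u v q : ℝ} (hu : 0 ≤ u) (hv : 0 ≤ v) (hq : 1 ≤ q) :
    u ^ q + v ^ q ≤ (u + v) ^ q := by
  have := NNReal.add_rpow_le_rpow_add (⟨u, hu⟩ : ℝ≥0) (⟨v, hv⟩ : ℝ≥0) hq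
  have h2 := (NNReal.coe_le_coe).2 this
  simp only [NNReal.coe_add, NNReal.coe_rpow] at h2
  exact h2

private lemma midpoint_ineq {H : Type*} [NormedAddCommGroup H] [InnerProductSpace ℝ H]
    (p : ℝ) (hp : 2 ≤ p) (x y : H) :
    ‖(1/2 : ℝ) • (x + y)‖ ^ p + (‖x - y‖ / 2) ^ p ≤ (‖x‖ ^ p + ‖y‖ ^ p) / 2 := by
  set m := ‖(1/2 : ℝ) • (x + y)‖ with hm
  set d := ‖x - y‖ / 2 with hd
  have hm0 : 0 ≤ m := norm_nonneg _
  have hd0 : 0 ≤ d := by positivity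
  have hq : (1:ℝ) ≤ p / 2 := by linarith
  -- parallelogram: m^2 + d^2 = (‖x‖^2 + ‖y‖^2)/2
  have hpar : m ^ (2:ℕ) + d ^ (2:ℕ) = (‖x‖ ^ (2:ℕ) + ‖y‖ ^ (2:ℕ)) / 2 := by
    have h := parallelogram_law_with_norm ℝ x y
    have hm2 : m = ‖x + y‖ / 2 := by
      rw [hm, norm_smul]; simp; ring
    rw [hm2, hd]; field_simp; linarith
  have key : ∀ a : ℝ, 0 ≤ a → a ^ p = (a ^ (2:ℕ)) ^ (p/2) := by
    intro a ha
    rw [← Real.rpow_natCast a 2, ← Real.rpow_mul ha]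
    congr 1; ring
  rw [key m hm0, key d hd0, key ‖x‖ (norm_nonneg _), key ‖y‖ (norm_nonneg _)]
  have h1 : (m ^ (2:ℕ)) ^ (p/2) + (d ^ (2:ℕ)) ^ (p/2) ≤ (m ^ (2:ℕ) + d ^ (2:ℕ)) ^ (p/2) :=
    real_add_rpow_le (by positivity) (by positivity) hq
  refine h1.trans ?_
  rw [hpar]
  -- ((a+b)/2)^(p/2) ≤ (a^(p/2)+b^(p/2))/2 by convexity
  have hc := convexOn_rpow hq
  have h2 := hc.2 (Set.mem_Ici.2 (by positivity : (0:ℝ) ≤ ‖x‖ ^ (2:ℕ)))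
      (Set.mem_Ici.2 (by positivity : (0:ℝ) ≤ ‖y‖ ^ (2:ℕ)))
      (by norm_num : (0:ℝ) ≤ 1/2) (by norm_num : (0:ℝ) ≤ 1/2) (by norm_num)
  simp only [smul_eq_mul] at h2
  calc ((‖x‖ ^ (2:ℕ) + ‖y‖ ^ (2:ℕ)) / 2) ^ (p/2)
      = (1/2 * ‖x‖ ^ (2:ℕ) + 1/2 * ‖y‖ ^ (2:ℕ)) ^ (p/2) := by ring_nf
    _ ≤ 1/2 * (‖x‖ ^ (2:ℕ)) ^ (p/2) + 1/2 * (‖y‖ ^ (2:ℕ)) ^ (p/2) := h2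
    _ = ((‖x‖ ^ (2:ℕ)) ^ (p/2) + (‖y‖ ^ (2:ℕ)) ^ (p/2)) / 2 := by ring

private lemma half_case {H : Type*} [NormedAddCommGroup H] [InnerProductSpace ℝ H]
    (p : ℝ) (hp : 2 ≤ p) (x y : H) (θ : ℝ) (h0 : 0 ≤ θ) (h2 : θ ≤ 1/2) :
    ‖θ • x + (1 - θ) • y‖ ^ p + (2:ℝ) ^ (1 - p) * θ * ‖x - y‖ ^ p ≤
      θ * ‖x‖ ^ p + (1 - θ) * ‖y‖ ^ p := by
  have hp1 : (1:ℝ) ≤ p := by linarith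
  set m := (1/2 : ℝ) • (x + y) with hmdef
  have hdecomp : θ • x + (1 - θ) • y = (2*θ) • m + (1 - 2*θ) • y := by
    rw [hmdef, smul_smul, smul_add]
    module
  have htri : ‖θ • x + (1 - θ) • y‖ ≤ (2*θ) * ‖m‖ + (1 - 2*θ) * ‖y‖ := by
    rw [hdecomp]
    refine (norm_add_le _ _).trans ?_
    rw [norm_smul_of_nonneg (by linarith : (0:ℝ) ≤ 2*θ),
      norm_smul_of_nonneg (by linarith : (0:ℝ) ≤ 1 - 2*θ)]
  have hmono : ‖θ • x + (1 - θ) • y‖ ^ p ≤ ((2*θ) * ‖m‖ + (1 - 2*θ) * ‖y‖) ^ p :=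
    Real.rpow_le_rpow (norm_nonneg _) htri (by linarith)
  have hcvx := (convexOn_rpow hp1).2 (Set.mem_Ici.2 (norm_nonneg m))
      (Set.mem_Ici.2 (norm_nonneg y)) (by linarith : (0:ℝ) ≤ 2*θ)
      (by linarith : (0:ℝ) ≤ 1 - 2*θ) (by ring)
  simp only [smul_eq_mul] at hcvx
  have hmid := midpoint_ineq p hp x y
  have hdp : (‖x - y‖ / 2) ^ p = (2:ℝ) ^ (-p) * ‖x - y‖ ^ p := by
    rw [Real.div_rpow (norm_nonneg _) (by norm_num : (0:ℝ) ≤ 2),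
      Real.rpow_neg (by norm_num : (0:ℝ) ≤ 2)]
    field_simp
  have hpow : (2:ℝ) ^ (1 - p) = 2 * (2:ℝ) ^ (-p) := by
    rw [show (1:ℝ) - p = 1 + (-p) by ring, Real.rpow_add (by norm_num), Real.rpow_one]
  have hkey : ‖θ • x + (1 - θ) • y‖ ^ p
      ≤ θ * ‖x‖ ^ p + (1 - θ) * ‖y‖ ^ p - (2:ℝ)^(1-p) * θ * ‖x-y‖^p := by
    have step1 : ‖θ • x + (1 - θ) • y‖ ^ p ≤ (2*θ) * ‖m‖ ^ p + (1 - 2*θ) * ‖y‖ ^ p :=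
      hmono.trans hcvx
    have step2 : ‖m‖ ^ p ≤ (‖x‖ ^ p + ‖y‖ ^ p) / 2 - (‖x-y‖/2) ^ p := by linarith
    have heq : (2*θ) * (‖x-y‖/2)^p = (2:ℝ)^(1-p) * θ * ‖x-y‖^p := by
      rw [hdp, hpow]; ring
    nlinarith [step1, step2, heq, h0]
  linarith

theorem norm_pow_hyperconvex {H : Type*} [NormedAddCommGroup H] [InnerProductSpace ℝ H]
    (p : ℝ) (hp : 2 ≤ p) :
    ∃ c : ℝ, 0 < c ∧ ∀ x y : H, ∀ θ : ℝ, θ ∈ Set.Icc (0 : ℝ) 1 →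
      ‖θ • x + (1 - θ) • y‖ ^ p + c * min θ (1 - θ) * ‖x - y‖ ^ p ≤
        θ * ‖x‖ ^ p + (1 - θ) * ‖y‖ ^ p := by
  refine ⟨(2:ℝ) ^ (1 - p), Real.rpow_pos_of_pos (by norm_num) _, ?_⟩
  intro x y θ hθ
  obtain ⟨h0, h1⟩ := hθ
  rcases le_or_gt θ (1/2) with hle | hgt
  · have hmin : min θ (1 - θ) = θ := min_eq_left (by linarith)
    rw [hmin]
    exact half_case p hp x y θ h0 hle
  · have hmin : min θ (1 - θ) = 1 - θ := min_eq_right (by linarith)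
    rw [hmin]
    have := half_case p hp y x (1 - θ) (by linarith) (by linarith)
    have hsub : ‖y - x‖ = ‖x - y‖ := norm_sub_rev y x
    rw [hsub] at this
    calc ‖θ • x + (1 - θ) • y‖ ^ p + (2:ℝ)^(1-p) * (1-θ) * ‖x - y‖ ^ p
        = ‖(1-θ) • y + (1 - (1-θ)) • x‖ ^ p + (2:ℝ)^(1-p) * (1-θ) * ‖x - y‖ ^ p := by
          rw [add_comm (θ • x)]; ring_nf
      _ ≤ (1-θ) * ‖y‖ ^ p + (1 - (1-θ)) * ‖x‖ ^ p := this
      _ = θ * ‖x‖ ^ p + (1 - θ) * ‖y‖ ^ p := by ring
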